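/- arXiv:2511.18476 — 9 statements merged into one kernel-verified Lean document; each statement's English description precedes it below -/
import Mathlib

section
/- A full-support stochastic choice correspondence μ has a Logit representation (i.e., there exists π: nonempty subsets of X → ℝ₊₊ with μ(T,S) = π(T) / Σ_{T'⊆S, T'≠∅} π(T') for all nonempty T ⊆ S) if and only if μ satisfies Independence of Irrelevant Sets: μ(T,S)/μ(T',S) = μ(T,S')/μ(T',S') for all nonempty T,T' ⊆ S∩S' whenever both ratios are well defined and positive. -/
open Finset

variable {X : Type*} [Fintype X] [DecidableEq X]

def IsSCC (μ : Finset X → Finset X → ℝ) : Prop :=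
  (∀ T S : Finset X, T ⊆ S → 0 ≤ μ T S ∧ μ T S ≤ 1) ∧
  (∀ S : Finset X, S.Nonempty →
      ∑ T ∈ S.powerset.filter (fun T => T.Nonempty), μ T S = 1) ∧
  (∀ T S : Finset X, ¬ T ⊆ S → μ T S = 0)

def FullSupport (μ : Finset X → Finset X → ℝ) : Prop :=
  ∀ T S : Finset X, T.Nonempty → T ⊆ S → 0 < μ T S

def LogitRep (μ : Finset X → Finset X → ℝ) : Prop :=
  ∃ π : Finset X → ℝ,
    (∀ T : Finset X, T.Nonempty → 0 < π T) ∧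
    ∀ T S : Finset X, T.Nonempty → T ⊆ S →
      μ T S = π T / ∑ T' ∈ S.powerset.filter (fun T' => T'.Nonempty), π T'

/-- Independence of Irrelevant Sets: the relative choice probability of two
collections is independent of the menu, whenever both ratios are well defined
and positive. -/
def IIS (μ : Finset X → Finset X → ℝ) : Prop :=
  ∀ T T' S S' : Finset X, T.Nonempty → T'.Nonempty →
    T ⊆ S ∩ S' → T' ⊆ S ∩ S' →
    0 < μ T S → 0 < μ T' S → 0 < μ T S' → 0 < μ T' S' →
    μ T S / μ T' S = μ T S' / μ T' S'

theorem logit_iff_IIS (μ : Finset X → Finset X → ℝ)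
    (hcard : 3 ≤ Fintype.card X) (hμ : IsSCC μ) (hfs : FullSupport μ) :
    LogitRep μ ↔ IIS μ := by
  obtain ⟨hb, hsum, hz⟩ := hμ
  constructor
  · rintro ⟨π, hπpos, hπ⟩ T T' S S' hT hT' hTS hT'S _ _ _ _
    have hTS1 : T ⊆ S := hTS.trans inter_subset_left
    have hTS2 : T ⊆ S' := hTS.trans inter_subset_right
    have hT'S1 : T' ⊆ S := hT'S.trans inter_subset_left
    have hT'S2 : T' ⊆ S' := hT'S.trans inter_subset_right
    have hD : ∀ U : Finset X, T ⊆ U →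
        0 < ∑ T'' ∈ U.powerset.filter (fun T'' => T''.Nonempty), π T'' := by
      intro U hU
      apply Finset.sum_pos
      · intro i hi
        exact hπpos i (mem_filter.mp hi).2
      · exact ⟨T, mem_filter.mpr ⟨mem_powerset.mpr hU, hT⟩⟩
    have h1 := hD S hTS1
    have h2 := hD S' hTS2
    rw [hπ T S hT hTS1, hπ T' S hT' hT'S1, hπ T S' hT hTS2, hπ T' S' hT' hT'S2]
    have hπT' := hπpos T' hT'
    field_simp
  · intro h
    refine ⟨fun T => μ T univ, fun T hT => hfs T univ hT (subset_univ T), ?_⟩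
    intro T S hT hTS
    have hS : S.Nonempty := hT.mono hTS
    have hTu : 0 < μ T univ := hfs T univ hT (subset_univ T)
    have hTSpos : 0 < μ T S := hfs T S hT hTS
    have key : ∀ T'' ∈ S.powerset.filter (fun T'' => T''.Nonempty),
        μ T'' S = μ T'' univ * (μ T S / μ T univ) := by
      intro T'' hT''
      obtain ⟨hT''S, hT''ne⟩ := mem_filter.mp hT''
      rw [mem_powerset] at hT''S
      have h1 : 0 < μ T'' S := hfs T'' S hT''ne hT''S
      have h2 : 0 < μ T'' univ := hfs T'' univ hT''ne (subset_univ _)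
      have := h T T'' S univ hT hT''ne (by simpa using hTS) (by simpa using hT''S)
        hTSpos h1 hTu h2
      rw [div_eq_div_iff h1.ne' h2.ne'] at this
      field_simp
      linarith [this]
    have hsum1 := hsum S hS
    rw [Finset.sum_congr rfl key, ← Finset.sum_mul] at hsum1
    have hDpos : 0 < ∑ T'' ∈ S.powerset.filter (fun T'' => T''.Nonempty), μ T'' univ := by
      apply Finset.sum_pos
      · intro i hi
        obtain ⟨hi1, hi2⟩ := mem_filter.mp hi
        exact hfs i univ hi2 (subset_univ _)
      · exact ⟨T, mem_filter.mpr ⟨mem_powerset.mpr hTS, hT⟩⟩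
    rw [eq_div_iff hDpos.ne']
    dsimp only
    field_simp at hsum1
    linarith [hsum1]
end

section
/- If a stochastic choice correspondence μ satisfies Positivity-1 and Relative Additivity, then for all S with x ∈ S, |S| ≥ 2, and all nonempty T ⊆ S\{x}: (i) μ(T, S\{x}) = 0 implies μ(T,S) + μ(T∪{x}, S) = 0, and (ii) μ(T, S\{x}) > 0 implies μ(T,S) + μ(T∪{x}, S) > 0. -/
open Finset

variable {X : Type*} [Fintype X] [DecidableEq X]

def Positivity1 (μ : Finset X → Finset X → ℝ) : Prop :=
  ∀ (x : X) (S : Finset X), x ∈ S → ∃ T : Finset X, x ∈ T ∧ 0 < μ T S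

def RelAdd (μ : Finset X → Finset X → ℝ) : Prop :=
  ∀ (x : X) (S T T' : Finset X), x ∈ S →
    T.Nonempty → T'.Nonempty → T ⊆ S.erase x → T' ⊆ S.erase x →
    μ T (S.erase x) * (μ T' S + μ (insert x T') S)
      = μ T' (S.erase x) * (μ T S + μ (insert x T) S)

lemma sum_split_aux (μ : Finset X → Finset X → ℝ) (hμ : IsSCC μ)
    (x : X) (S : Finset X) (hx : x ∈ S) :
    ∑ T' ∈ (S.erase x).powerset.filter (fun T => T.Nonempty),
        (μ T' S + μ (insert x T') S) = 1 - μ {x} S := by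
  have hxE : x ∉ S.erase x := notMem_erase x S
  have hdecomp : S.powerset.filter (fun T => T.Nonempty)
      = ((S.erase x).powerset.filter (fun T => T.Nonempty))
          ∪ (S.erase x).powerset.image (insert x) := by
    ext A
    simp only [mem_union, mem_filter, mem_powerset, mem_image]
    constructor
    · rintro ⟨hAS, hA⟩
      by_cases hxA : x ∈ A
      · right
        refine ⟨A.erase x, fun a ha => mem_erase.2
          ⟨(mem_erase.1 ha).1, hAS (mem_erase.1 ha).2⟩, insert_erase hxA⟩
      · left
        exact ⟨fun a ha => mem_erase.2 ⟨fun h => hxA (h ▸ ha), hAS ha⟩, hA⟩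
    · rintro (⟨hAE, hA⟩ | ⟨B, hBE, rfl⟩)
      · exact ⟨hAE.trans (erase_subset x S), hA⟩
      · exact ⟨insert_subset hx (hBE.trans (erase_subset x S)), insert_nonempty x B⟩
  have hdisj : Disjoint ((S.erase x).powerset.filter (fun T => T.Nonempty))
      ((S.erase x).powerset.image (insert x)) := by
    rw [disjoint_left]
    rintro A hA hA'
    obtain ⟨B, hB, rfl⟩ := mem_image.1 hA'
    exact hxE (mem_powerset.1 (mem_filter.1 hA).1 (mem_insert_self x B))
  have htot := hμ.2.1 S ⟨x, hx⟩
  have hinj : ∀ a ∈ (S.erase x).powerset, ∀ b ∈ (S.erase x).powerset,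
      insert x a = insert x b → a = b := by
    intro a ha b hb hab
    have hxa : x ∉ a := fun h => hxE (mem_powerset.1 ha h)
    have hxb : x ∉ b := fun h => hxE (mem_powerset.1 hb h)
    rw [← erase_insert hxa, ← erase_insert hxb, hab]
  rw [hdecomp, sum_union hdisj, sum_image hinj] at htot
  have hemp : (∅ : Finset X) ∈ (S.erase x).powerset := mem_powerset.2 (empty_subset _)
  have hsplit : ∑ T' ∈ (S.erase x).powerset, μ (insert x T') S
      = μ {x} S + ∑ T' ∈ (S.erase x).powerset.filter (fun T => T.Nonempty),
          μ (insert x T') S := by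
    have hfe : (S.erase x).powerset.filter (fun T => T.Nonempty)
        = (S.erase x).powerset.erase ∅ := by
      ext A
      simp [mem_filter, mem_erase, Finset.nonempty_iff_ne_empty, and_comm]
    rw [hfe, ← Finset.add_sum_erase _ _ hemp]
    simp
  rw [hsplit] at htot
  rw [sum_add_distrib]
  linarith

theorem pos1_relAdd_lemma (μ : Finset X → Finset X → ℝ)
    (hcard : 3 ≤ Fintype.card X) (hμ : IsSCC μ)
    (hpos : Positivity1 μ) (hra : RelAdd μ) :
    ∀ (x : X) (S T : Finset X), x ∈ S → 2 ≤ S.card →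
      T.Nonempty → T ⊆ S.erase x →
      (μ T (S.erase x) = 0 → μ T S + μ (insert x T) S = 0) ∧
      (0 < μ T (S.erase x) → 0 < μ T S + μ (insert x T) S) := by
  intro x S T hx h2 hT hTE
  have hEne : (S.erase x).Nonempty := by
    rw [← card_pos, card_erase_of_mem hx]; omega
  have hsum1 : ∑ T' ∈ (S.erase x).powerset.filter (fun T => T.Nonempty),
      μ T' (S.erase x) = 1 := hμ.2.1 _ hEne
  have hkey : μ T S + μ (insert x T) S = μ T (S.erase x) * (1 - μ {x} S) := by
    have h1 : ∑ T' ∈ (S.erase x).powerset.filter (fun T => T.Nonempty),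
        μ T (S.erase x) * (μ T' S + μ (insert x T') S)
        = ∑ T' ∈ (S.erase x).powerset.filter (fun T => T.Nonempty),
            μ T' (S.erase x) * (μ T S + μ (insert x T) S) := by
      refine sum_congr rfl fun T' hT' => ?_
      simp only [mem_filter, mem_powerset] at hT'
      exact hra x S T T' hx hT hT'.2 hTE hT'.1
    rw [← mul_sum, ← sum_mul, sum_split_aux μ hμ x S hx, hsum1, one_mul] at h1
    linarith
  have hxlt : μ {x} S < 1 := by
    obtain ⟨y, hyE⟩ := hEne
    have hyS : y ∈ S := (erase_subset x S) hyE
    obtain ⟨T0, hyT0, hT0pos⟩ := hpos y S hyS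
    have hT0S : T0 ⊆ S := by
      by_contra h
      rw [hμ.2.2 T0 S h] at hT0pos; linarith
    have hne : ({x} : Finset X) ≠ T0 := by
      intro h
      have hyx : y ∈ ({x} : Finset X) := by rw [h]; exact hyT0
      exact (mem_erase.1 hyE).1 (mem_singleton.1 hyx)
    have hsub : ({{x}, T0} : Finset (Finset X))
        ⊆ S.powerset.filter (fun T => T.Nonempty) := by
      intro A hA
      rcases mem_insert.1 hA with rfl | hA
      · exact mem_filter.2 ⟨mem_powerset.2 (singleton_subset_iff.2 hx),
          singleton_nonempty x⟩
      · rw [mem_singleton.1 hA]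
        exact mem_filter.2 ⟨mem_powerset.2 hT0S, ⟨y, hyT0⟩⟩
    have hle := Finset.sum_le_sum_of_subset_of_nonneg hsub
      (fun A hA _ => (hμ.1 A S (mem_powerset.1 (mem_filter.1 hA).1)).1)
    rw [sum_pair hne, hμ.2.1 S ⟨x, hx⟩] at hle
    linarith
  constructor
  · intro h0; rw [hkey, h0, zero_mul]
  · intro hp; rw [hkey]; exact mul_pos hp (by linarith)
end

section
/- A stochastic choice correspondence μ has a Random Categorization representation if and only if it satisfies Positivity-1 and Relative Additivity. -/
open Finset

variable {X : Type*} [Fintype X] [DecidableEq X]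

noncomputable def rcgVal (m : Finset X → ℝ) (T S : Finset X) : ℝ :=
  (∑ C : Finset X, if T = C ∩ S then m C else 0) /
    ∑ C ∈ Finset.univ.filter (fun C : Finset X => (C ∩ S).Nonempty), m C

def RCGRep (μ : Finset X → Finset X → ℝ) : Prop :=
  ∃ m : Finset X → ℝ,
    (∀ C, 0 ≤ m C) ∧ m ∅ = 0 ∧ (∑ C : Finset X, m C = 1) ∧
    (∀ x : X, ∃ C : Finset X, x ∈ C ∧ 0 < m C) ∧
    ∀ T S : Finset X, T.Nonempty → T ⊆ S → μ T S = rcgVal m T S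

noncomputable def Nval (m : Finset X → ℝ) (T S : Finset X) : ℝ :=
  ∑ C : Finset X, if T = C ∩ S then m C else 0

noncomputable def Dval (m : Finset X → ℝ) (S : Finset X) : ℝ :=
  ∑ C ∈ Finset.univ.filter (fun C : Finset X => (C ∩ S).Nonempty), m C

lemma rcgVal_eq (m : Finset X → ℝ) (T S : Finset X) :
    rcgVal m T S = Nval m T S / Dval m S := rfl

lemma Nval_split (m : Finset X → ℝ) {x : X} {S T : Finset X} (hx : x ∈ S)
    (hT : T ⊆ S.erase x) :
    Nval m T (S.erase x) = Nval m T S + Nval m (insert x T) S := by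
  unfold Nval
  rw [← Finset.sum_add_distrib]
  refine Finset.sum_congr rfl fun C _ => ?_
  have hxT : x ∉ T := fun h => (Finset.mem_erase.1 (hT h)).1 rfl
  by_cases hxC : x ∈ C
  · have h1 : C ∩ S.erase x = (C ∩ S).erase x := by
      ext y; simp only [Finset.mem_inter, Finset.mem_erase]; tauto
    have hxCS : x ∈ C ∩ S := Finset.mem_inter.2 ⟨hxC, hx⟩
    have h2 : T ≠ C ∩ S := fun h => hxT (h ▸ hxCS)
    by_cases h3 : T = C ∩ S.erase x
    · have h4 : insert x T = C ∩ S := by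
        rw [h3, h1, Finset.insert_erase hxCS]
      rw [if_pos h3, if_neg h2, if_pos h4]; ring
    · have h4 : insert x T ≠ C ∩ S := by
        intro h
        exact h3 (by rw [h1, ← h, Finset.erase_insert hxT])
      rw [if_neg h3, if_neg h2, if_neg h4]; ring
  · have h1 : C ∩ S.erase x = C ∩ S := by
      ext y; simp only [Finset.mem_inter, Finset.mem_erase]
      constructor
      · rintro ⟨hy, _, hy2⟩; exact ⟨hy, hy2⟩
      · rintro ⟨hy, hy2⟩; exact ⟨hy, fun h => hxC (h ▸ hy), hy2⟩
    have h2 : insert x T ≠ C ∩ S := by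
      intro h
      have : x ∈ C ∩ S := h ▸ Finset.mem_insert_self x T
      exact hxC (Finset.mem_inter.1 this).1
    rw [h1, if_neg h2]
    by_cases h : T = C ∩ S
    · rw [if_pos h]; ring
    · rw [if_neg h]; ring

lemma Nval_sum (m : Finset X → ℝ) (S : Finset X) :
    ∑ T ∈ S.powerset.filter (fun T => T.Nonempty), Nval m T S = Dval m S := by
  unfold Nval Dval
  rw [Finset.sum_comm, Finset.sum_filter]
  refine Finset.sum_congr rfl fun C _ => ?_
  rw [Finset.sum_ite_eq' (S.powerset.filter (fun T => T.Nonempty)) (C ∩ S) (fun _ => m C)]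
  simp [Finset.inter_subset_right]

lemma Dval_pos (m : Finset X → ℝ) (hm0 : ∀ C, 0 ≤ m C)
    (hcov : ∀ y : X, ∃ C : Finset X, y ∈ C ∧ 0 < m C) {S : Finset X} (hS : S.Nonempty) :
    0 < Dval m S := by
  obtain ⟨y, hy⟩ := hS
  obtain ⟨C, hyC, hC⟩ := hcov y
  refine Finset.sum_pos' (fun i _ => hm0 i) ⟨C, ?_, hC⟩
  simp only [Finset.mem_filter, Finset.mem_univ, true_and]
  exact ⟨y, Finset.mem_inter.2 ⟨hyC, hy⟩⟩

lemma step_lemma (μ : Finset X → Finset X → ℝ) (m : Finset X → ℝ)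
    (hμ : IsSCC μ) (hra : RelAdd μ) (hm0 : ∀ C, 0 ≤ m C)
    (hcov : ∀ y : X, ∃ C : Finset X, y ∈ C ∧ 0 < m C)
    {S : Finset X} {x : X} (hx : x ∈ S)
    (hP : ∀ T, T.Nonempty → T ⊆ S → μ T S = Nval m T S / Dval m S) :
    ∀ T, T.Nonempty → T ⊆ S.erase x →
      μ T (S.erase x) = Nval m T (S.erase x) / Dval m (S.erase x) := by
  intro T hT hTS
  have hS'ne : (S.erase x).Nonempty := hT.mono hTS
  have hSne : S.Nonempty := ⟨x, hx⟩
  have hDS : 0 < Dval m S := Dval_pos m hm0 hcov hSne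
  have hDS' : 0 < Dval m (S.erase x) := Dval_pos m hm0 hcov hS'ne
  have key : ∀ T', T'.Nonempty → T' ⊆ S.erase x →
      μ T (S.erase x) * Nval m T' (S.erase x) = μ T' (S.erase x) * Nval m T (S.erase x) := by
    intro T' hT' hT'S
    have h1 := hra x S T T' hx hT hT' hTS hT'S
    have eT : μ T S + μ (insert x T) S = Nval m T (S.erase x) / Dval m S := by
      rw [hP T hT (hTS.trans (Finset.erase_subset x S)),
        hP (insert x T) (Finset.insert_nonempty x T)
          (Finset.insert_subset hx (hTS.trans (Finset.erase_subset x S))),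
        ← add_div, ← Nval_split m hx hTS]
    have eT' : μ T' S + μ (insert x T') S = Nval m T' (S.erase x) / Dval m S := by
      rw [hP T' hT' (hT'S.trans (Finset.erase_subset x S)),
        hP (insert x T') (Finset.insert_nonempty x T')
          (Finset.insert_subset hx (hT'S.trans (Finset.erase_subset x S))),
        ← add_div, ← Nval_split m hx hT'S]
    rw [eT, eT'] at h1
    field_simp [hDS.ne'] at h1
    linarith [h1]
  have hsum := hμ.2.1 (S.erase x) hS'ne
  have h2 : μ T (S.erase x) * Dval m (S.erase x) = Nval m T (S.erase x) := by
    calc μ T (S.erase x) * Dval m (S.erase x)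
        = ∑ T' ∈ (S.erase x).powerset.filter (fun T => T.Nonempty),
            μ T (S.erase x) * Nval m T' (S.erase x) := by
          rw [← Nval_sum m (S.erase x), Finset.mul_sum]
      _ = ∑ T' ∈ (S.erase x).powerset.filter (fun T => T.Nonempty),
            μ T' (S.erase x) * Nval m T (S.erase x) := by
          refine Finset.sum_congr rfl fun T' hT' => ?_
          simp only [Finset.mem_filter, Finset.mem_powerset] at hT'
          exact key T' hT'.2 hT'.1
      _ = (∑ T' ∈ (S.erase x).powerset.filter (fun T => T.Nonempty),
            μ T' (S.erase x)) * Nval m T (S.erase x) := by rw [Finset.sum_mul]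
      _ = Nval m T (S.erase x) := by rw [hsum, one_mul]
  rw [eq_div_iff hDS'.ne', h2]

theorem rcg_iff_pos1_relAdd (μ : Finset X → Finset X → ℝ)
    (hcard : 3 ≤ Fintype.card X) (hμ : IsSCC μ) :
    RCGRep μ ↔ Positivity1 μ ∧ RelAdd μ := by
  constructor
  · rintro ⟨m, hm0, hm_empty, hmsum, hcov, hrep⟩
    constructor
    · intro x S hxS
      obtain ⟨C, hxC, hC⟩ := hcov x
      have hmem : x ∈ C ∩ S := Finset.mem_inter.2 ⟨hxC, hxS⟩
      refine ⟨C ∩ S, hmem, ?_⟩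
      rw [hrep _ _ ⟨x, hmem⟩ Finset.inter_subset_right, rcgVal_eq]
      apply div_pos
      · unfold Nval
        refine Finset.sum_pos' (fun i _ => ?_) ⟨C, Finset.mem_univ C, ?_⟩
        · split_ifs
          · exact hm0 i
          · exact le_rfl
        · rw [if_pos rfl]; exact hC
      · exact Dval_pos m hm0 hcov ⟨x, hxS⟩
    · intro x S T T' hxS hT hT' hTS hT'S
      have hTsub : T ⊆ S := hTS.trans (Finset.erase_subset x S)
      have hT'sub : T' ⊆ S := hT'S.trans (Finset.erase_subset x S)
      rw [hrep T _ hT hTS, hrep T' _ hT' hT'S, hrep T' S hT' hT'sub, hrep T S hT hTsub,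
        hrep (insert x T') S (Finset.insert_nonempty x T') (Finset.insert_subset hxS hT'sub),
        hrep (insert x T) S (Finset.insert_nonempty x T) (Finset.insert_subset hxS hTsub)]
      simp only [rcgVal_eq]
      rw [← add_div, ← add_div, ← Nval_split m hxS hTS, ← Nval_split m hxS hT'S]
      ring
  · rintro ⟨hpos, hra⟩
    have hXne : Nonempty X := Fintype.card_pos_iff.mp (by omega)
    have hUne : (Finset.univ : Finset X).Nonempty := Finset.univ_nonempty
    set m : Finset X → ℝ := fun C => if C.Nonempty then μ C Finset.univ else 0 with hm
    have hm0 : ∀ C, 0 ≤ m C := by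
      intro C
      simp only [hm]
      split_ifs
      · exact (hμ.1 C Finset.univ (Finset.subset_univ C)).1
      · exact le_rfl
    have hmsum : ∑ C : Finset X, m C = 1 := by
      simp only [hm]
      rw [← Finset.sum_filter]
      rw [← hμ.2.1 Finset.univ hUne, Finset.powerset_univ]
    have hcov : ∀ y : X, ∃ C : Finset X, y ∈ C ∧ 0 < m C := by
      intro y
      obtain ⟨T, hyT, hpos'⟩ := hpos y Finset.univ (Finset.mem_univ y)
      refine ⟨T, hyT, ?_⟩
      simp only [hm]
      rw [if_pos ⟨y, hyT⟩]
      exact hpos'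
    have base : ∀ T : Finset X, T.Nonempty → T ⊆ Finset.univ →
        μ T Finset.univ = Nval m T Finset.univ / Dval m Finset.univ := by
      intro T hT _
      have hN : Nval m T Finset.univ = m T := by
        unfold Nval
        simp only [Finset.inter_univ]
        rw [Finset.sum_ite_eq Finset.univ T m, if_pos (Finset.mem_univ T)]
      have hD : Dval m Finset.univ = 1 := by
        unfold Dval
        rw [← hmsum]
        refine Finset.sum_subset (Finset.filter_subset _ _) fun C _ hC => ?_
        simp only [Finset.mem_filter, Finset.mem_univ, true_and, Finset.inter_univ] at hC
        simp only [hm]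
        rw [if_neg hC]
      rw [hN, hD, div_one]
      simp only [hm]
      rw [if_pos hT]
    have main : ∀ n : ℕ, ∀ S : Finset X, Sᶜ.card ≤ n →
        ∀ T, T.Nonempty → T ⊆ S → μ T S = Nval m T S / Dval m S := by
      intro n
      induction n with
      | zero =>
        intro S hS
        have hSu : S = Finset.univ := by
          have h0 : Sᶜ = ∅ := Finset.card_eq_zero.mp (Nat.le_zero.mp hS)
          have := congrArg compl h0
          simpa using this
        subst hSu
        exact base
      | succ n ih =>
        intro S hS T hT hTS
        by_cases hSu : S = Finset.univ
        · subst hSu; exact base T hT hTS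
        · obtain ⟨x, hx⟩ : ∃ x, x ∉ S := by
            by_contra h
            push_neg at h
            exact hSu (Finset.eq_univ_iff_forall.mpr h)
          have hcompl : (insert x S)ᶜ.card ≤ n := by
            rw [Finset.compl_insert, Finset.card_erase_of_mem (Finset.mem_compl.mpr hx)]
            have h1 : 1 ≤ Sᶜ.card := Finset.card_pos.mpr ⟨x, Finset.mem_compl.mpr hx⟩
            omega
          have hPS := ih (insert x S) hcompl
          have hstep := step_lemma μ m hμ hra hm0 hcov (Finset.mem_insert_self x S) hPS T hT
            (by rw [Finset.erase_insert hx]; exact hTS)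
          rwa [Finset.erase_insert hx] at hstep
    refine ⟨m, hm0, by simp [hm], hmsum, hcov, fun T S hT hTS => ?_⟩
    rw [rcgVal_eq]
    exact main Sᶜ.card S le_rfl T hT hTS
end

section
/- Relative Additivity implies monotonicity: if a stochastic choice correspondence μ satisfies Positivity-1 and Relative Additivity, then μ(T,S) ≤ μ(T, S\{x}) for all nonempty T ⊆ S\{x} with x ∈ S. -/
open Finset

variable {X : Type*} [Fintype X] [DecidableEq X]

theorem relAdd_implies_monotone (μ : Finset X → Finset X → ℝ)
    (hμ : IsSCC μ) (hpos : Positivity1 μ) (hra : RelAdd μ) :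
    ∀ (x : X) (S T : Finset X), x ∈ S → T.Nonempty → T ⊆ S.erase x →
      μ T S ≤ μ T (S.erase x) := by
  intro x S T hxS hTne hTsub
  obtain ⟨hbd, htot, -⟩ := hμ
  set S' := S.erase x with hS'
  have hS'ne : S'.Nonempty := hTne.mono hTsub
  set P := S'.powerset.filter (fun T => T.Nonempty) with hP
  have h1 : ∑ T' ∈ P, μ T' S' = 1 := htot S' hS'ne
  have hQ : ∑ U ∈ S.powerset.filter (fun T => T.Nonempty), μ U S = 1 := htot S ⟨x, hxS⟩
  have hnotmem : ∀ {V : Finset X}, V ∈ P → x ∉ V := by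
    intro V hV
    simp only [hP, mem_filter, mem_powerset] at hV
    exact fun h => (mem_erase.mp (hV.1 h)).1 rfl
  -- the decomposition of the nonempty subsets of S
  have hQeq : S.powerset.filter (fun T => T.Nonempty)
      = insert {x} (P ∪ P.image (insert x)) := by
    ext U
    simp only [mem_filter, mem_powerset, mem_insert, mem_union, mem_image, hP, hS',
      Finset.subset_erase]
    constructor
    · rintro ⟨hUS, hUne⟩
      by_cases hxU : x ∈ U
      · by_cases hU : U = {x}
        · exact Or.inl hU
        · refine Or.inr (Or.inr ⟨U.erase x, ⟨⟨(erase_subset x U).trans hUS,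
            notMem_erase x U⟩, ?_⟩, insert_erase hxU⟩)
          rw [Finset.nonempty_iff_ne_empty]
          intro hemp
          exact hU (by rw [← insert_erase hxU, hemp, insert_empty_eq])
      · exact Or.inr (Or.inl ⟨⟨hUS, hxU⟩, hUne⟩)
    · rintro (rfl | ⟨⟨⟨hsub, hx⟩, hne⟩ | ⟨V, ⟨⟨hVsub, hxV⟩, hVne⟩, rfl⟩⟩)
      · exact ⟨singleton_subset_iff.mpr hxS, singleton_nonempty x⟩
      · exact ⟨hsub, hne⟩
      · exact ⟨insert_subset hxS hVsub, insert_nonempty x V⟩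
  have hdisj : Disjoint P (P.image (insert x)) := by
    rw [Finset.disjoint_left]
    rintro U hU hU'
    obtain ⟨V, hV, rfl⟩ := mem_image.mp hU'
    exact hnotmem hU (mem_insert_self x V)
  have hxnotin : {x} ∉ P ∪ P.image (insert x) := by
    rw [mem_union]
    rintro (h | h)
    · exact hnotmem h (mem_singleton_self x)
    · obtain ⟨V, hV, hEq⟩ := mem_image.mp h
      simp only [hP, mem_filter, mem_powerset] at hV
      have hxV : x ∉ V := fun hh => (mem_erase.mp (hV.1 hh)).1 rfl
      obtain ⟨y, hy⟩ := hV.2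
      have : y ∈ ({x} : Finset X) := hEq ▸ mem_insert_of_mem hy
      rw [mem_singleton] at this
      exact hxV (this ▸ hy)
  have him : ∑ T' ∈ P, μ (insert x T') S = ∑ U ∈ P.image (insert x), μ U S := by
    rw [Finset.sum_image]
    intro a ha b hb hab
    have := congrArg (Finset.erase · x) hab
    simpa [Finset.erase_insert (hnotmem ha), Finset.erase_insert (hnotmem hb)] using this
  have hsplit : ∑ T' ∈ P, (μ T' S + μ (insert x T') S) = 1 - μ {x} S := by
    rw [Finset.sum_add_distrib, him, ← Finset.sum_union hdisj]
    have := hQ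
    rw [hQeq, Finset.sum_insert hxnotin] at this
    linarith
  have hsum : ∑ T' ∈ P, μ T S' * (μ T' S + μ (insert x T') S)
      = ∑ T' ∈ P, μ T' S' * (μ T S + μ (insert x T) S) := by
    apply Finset.sum_congr rfl
    intro T' hT'
    simp only [hP, mem_filter, mem_powerset] at hT'
    exact hra x S T T' hxS hTne hT'.2 hTsub hT'.1
  rw [← Finset.mul_sum, hsplit, ← Finset.sum_mul, h1, one_mul] at hsum
  -- hsum : μ T S' * (1 - μ {x} S) = μ T S + μ (insert x T) S
  have h0 : 0 ≤ μ T S' := (hbd T S' hTsub).1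
  have h2 : 0 ≤ μ {x} S := (hbd {x} S (singleton_subset_iff.mpr hxS)).1
  have h3 : 0 ≤ μ (insert x T) S :=
    (hbd (insert x T) S (insert_subset hxS (hTsub.trans (erase_subset x S)))).1
  nlinarith
end

section
/- A full-support stochastic choice correspondence μ has an Independent Choice representation if and only if it satisfies Independence of Irrelevant Sets and Relative Additivity. -/
open Finset

variable {X : Type*} [Fintype X] [DecidableEq X]

def ICRep (μ : Finset X → Finset X → ℝ) : Prop :=
  ∃ γ : X → ℝ,
    (∀ x, 0 < γ x ∧ γ x < 1) ∧
    ∀ T S : Finset X, T.Nonempty → T ⊆ S →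
      μ T S = ((∏ x ∈ T, γ x) * ∏ y ∈ S \ T, (1 - γ y))
        / (1 - ∏ z ∈ S, (1 - γ z))

lemma aux_denom_pos (γ : X → ℝ) (hγ : ∀ x, 0 < γ x ∧ γ x < 1) {S : Finset X} (hS : S.Nonempty) :
    0 < 1 - ∏ z ∈ S, (1 - γ z) := by
  obtain ⟨a, ha⟩ := hS
  have h1 : ∏ z ∈ S, (1 - γ z) ≤ (1 - γ a) * 1 := by
    rw [← Finset.mul_prod_erase S _ ha]
    refine mul_le_mul_of_nonneg_left ?_ (by linarith [(hγ a).2])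
    exact Finset.prod_le_one (fun i _ => by linarith [(hγ i).2]) (fun i _ => by linarith [(hγ i).1])
  nlinarith [(hγ a).1]

lemma aux_rep_eq (μ : Finset X → Finset X → ℝ) (γ : X → ℝ) (hγ : ∀ x, 0 < γ x ∧ γ x < 1)
    (hrep : ∀ T S : Finset X, T.Nonempty → T ⊆ S →
      μ T S = ((∏ x ∈ T, γ x) * ∏ y ∈ S \ T, (1 - γ y)) / (1 - ∏ z ∈ S, (1 - γ z)))
    (T S : Finset X) (hT : T.Nonempty) (hTS : T ⊆ S) :
    μ T S = (∏ x ∈ T, γ x / (1 - γ x)) *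
      ((∏ z ∈ S, (1 - γ z)) / (1 - ∏ z ∈ S, (1 - γ z))) := by
  have hq : ∀ x : X, (1 : ℝ) - γ x ≠ 0 := fun x => by have := (hγ x).2; intro h; linarith
  have hsd : (∏ y ∈ S \ T, (1 - γ y)) * ∏ y ∈ T, (1 - γ y) = ∏ y ∈ S, (1 - γ y) :=
    Finset.prod_sdiff hTS
  have hD : (1 : ℝ) - ∏ z ∈ S, (1 - γ z) ≠ 0 :=
    (aux_denom_pos γ hγ (hT.mono hTS)).ne'
  rw [hrep T S hT hTS, Finset.prod_div_distrib]
  have hTne : (∏ y ∈ T, (1 - γ y)) ≠ 0 := Finset.prod_ne_zero_iff.mpr fun x _ => hq x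
  field_simp
  linear_combination (∏ x ∈ T, γ x) * hsd

lemma aux_K_pos (γ : X → ℝ) (hγ : ∀ x, 0 < γ x ∧ γ x < 1) {S : Finset X} (hS : S.Nonempty) :
    0 < (∏ z ∈ S, (1 - γ z)) / (1 - ∏ z ∈ S, (1 - γ z)) :=
  div_pos (Finset.prod_pos fun i _ => by linarith [(hγ i).2]) (aux_denom_pos γ hγ hS)

theorem ic_iff_IIS_relAdd (μ : Finset X → Finset X → ℝ)
    (hcard : 3 ≤ Fintype.card X) (hμ : IsSCC μ) (hfs : FullSupport μ) :
    ICRep μ ↔ IIS μ ∧ RelAdd μ := by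
  constructor
  · rintro ⟨γ, hγ, hrep⟩
    constructor
    · intro T T' S S' hT hT' hTss hT'ss _ _ _ _
      have hTS : T ⊆ S := hTss.trans inter_subset_left
      have hTS' : T ⊆ S' := hTss.trans inter_subset_right
      have hT'S : T' ⊆ S := hT'ss.trans inter_subset_left
      have hT'S' : T' ⊆ S' := hT'ss.trans inter_subset_right
      rw [aux_rep_eq μ γ hγ hrep T S hT hTS, aux_rep_eq μ γ hγ hrep T' S hT' hT'S,
        aux_rep_eq μ γ hγ hrep T S' hT hTS', aux_rep_eq μ γ hγ hrep T' S' hT' hT'S',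
        mul_div_mul_right _ _ (aux_K_pos γ hγ (hT.mono hTS)).ne',
        mul_div_mul_right _ _ (aux_K_pos γ hγ (hT.mono hTS')).ne']
    · intro x S T T' hx hT hT' hTsub hT'sub
      have hq : ∀ y : X, (1 : ℝ) - γ y ≠ 0 := fun y => by have := (hγ y).2; intro h; linarith
      have hsum : ∀ U : Finset X, U.Nonempty → U ⊆ S.erase x →
          μ U S + μ (insert x U) S = (∏ y ∈ U, γ y / (1 - γ y)) *
            ((∏ z ∈ S.erase x, (1 - γ z)) / (1 - ∏ z ∈ S, (1 - γ z))) := by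
        intro U hU hUsub
        have hxU : x ∉ U := (subset_erase.mp hUsub).2
        have hUS : U ⊆ S := (subset_erase.mp hUsub).1
        rw [aux_rep_eq μ γ hγ hrep U S hU hUS,
          aux_rep_eq μ γ hγ hrep (insert x U) S (insert_nonempty _ _)
            (insert_subset hx hUS),
          Finset.prod_insert hxU, ← Finset.mul_prod_erase S (fun z => 1 - γ z) hx]
        have hD : (1 : ℝ) - (1 - γ x) * ∏ z ∈ S.erase x, (1 - γ z) ≠ 0 := by
          have := aux_denom_pos γ hγ ⟨x, hx⟩
          rw [← Finset.mul_prod_erase S (fun z => 1 - γ z) hx] at this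
          exact this.ne'
        have key : ∀ a p d g : ℝ, (1 - g) ≠ 0 → d ≠ 0 →
            a * ((1 - g) * p / d) + g / (1 - g) * a * ((1 - g) * p / d) = a * (p / d) := by
          intro a p d g hg hd
          field_simp
          ring
        exact key _ _ _ _ (hq x) hD
      have hEne : (S.erase x).Nonempty := hT.mono hTsub
      rw [hsum T hT hTsub, hsum T' hT' hT'sub,
        aux_rep_eq μ γ hγ hrep T (S.erase x) hT hTsub,
        aux_rep_eq μ γ hγ hrep T' (S.erase x) hT' hT'sub]
      ring
  · rintro ⟨hiis, hra⟩
    have hcard1 : 1 < Fintype.card X := by omega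
    have hX : Nonempty X := Fintype.card_pos_iff.mp (by omega)
    have hvpos : ∀ T : Finset X, T.Nonempty → 0 < μ T univ :=
      fun T hT => hfs T univ hT (subset_univ T)
    have hVpos : ∀ S : Finset X, S.Nonempty →
        0 < ∑ T' ∈ S.powerset.filter (fun T => T.Nonempty), μ T' univ := by
      intro S hS
      refine Finset.sum_pos (fun T hT => hvpos T (mem_filter.mp hT).2) ?_
      exact ⟨S, mem_filter.mpr ⟨mem_powerset.mpr (Finset.Subset.refl S), hS⟩⟩
    have hA : ∀ T S : Finset X, T.Nonempty → T ⊆ S →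
        μ T S = μ T univ / ∑ T' ∈ S.powerset.filter (fun T => T.Nonempty), μ T' univ := by
      intro T S hT hTS
      have hS : S.Nonempty := hT.mono hTS
      have hratio : ∀ T' ∈ S.powerset.filter (fun T => T.Nonempty),
          μ T S * μ T' univ = μ T' S * μ T univ := by
        intro T' hT'mem
        obtain ⟨hT'pow, hT'ne⟩ := mem_filter.mp hT'mem
        have hT'S : T' ⊆ S := mem_powerset.mp hT'pow
        have h := hiis T T' S univ hT hT'ne (by simpa [inter_comm] using hTS)
          (by simpa [inter_comm] using hT'S) (hfs T S hT hTS) (hfs T' S hT'ne hT'S)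
          (hfs T univ hT (subset_univ _)) (hfs T' univ hT'ne (subset_univ _))
        rw [div_eq_div_iff (hfs T' S hT'ne hT'S).ne' (hvpos T' hT'ne).ne'] at h
        linear_combination h
      have hsum1 := hμ.2.1 S hS
      have hkey : μ T S * ∑ T' ∈ S.powerset.filter (fun T => T.Nonempty), μ T' univ
          = μ T univ := by
        rw [Finset.mul_sum, Finset.sum_congr rfl (fun T' h => hratio T' h), ← Finset.sum_mul,
          hsum1, one_mul]
      rw [eq_div_iff (hVpos S hS).ne']
      exact hkey
    have herase : ∀ x : X, (univ.erase x).Nonempty := by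
      intro x
      obtain ⟨y, hy⟩ := Fintype.exists_ne_of_one_lt_card hcard1 x
      exact ⟨y, mem_erase.mpr ⟨hy, mem_univ y⟩⟩
    have hs : ∀ (x : X) (T T' : Finset X), T.Nonempty → T'.Nonempty → x ∉ T → x ∉ T' →
        μ T univ * μ (insert x T') univ = μ T' univ * μ (insert x T) univ := by
      intro x T T' hT hT' hxT hxT'
      have hTsub : T ⊆ univ.erase x := subset_erase.mpr ⟨subset_univ _, hxT⟩
      have hT'sub : T' ⊆ univ.erase x := subset_erase.mpr ⟨subset_univ _, hxT'⟩
      have h := hra x univ T T' (mem_univ x) hT hT' hTsub hT'sub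
      rw [hA T (univ.erase x) hT hTsub, hA T' (univ.erase x) hT' hT'sub] at h
      have hV' := hVpos (univ.erase x) (herase x)
      rw [div_mul_eq_mul_div, div_mul_eq_mul_div, div_eq_div_iff hV'.ne' hV'.ne'] at h
      have h2 := mul_right_cancel₀ hV'.ne' h
      linear_combination h2
    -- pick a companion for each x
    have hpick : ∀ x : X, ∃ y : X, y ≠ x := fun x =>
      Fintype.exists_ne_of_one_lt_card hcard1 x
    choose p hp using hpick
    have hxpx : ∀ x : X, x ∉ ({p x} : Finset X) := by
      intro x
      simp only [Finset.mem_singleton]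
      exact fun h => (hp x) h.symm
    set r : X → ℝ := fun x => μ (insert x {p x}) univ / μ ({p x}) univ with hrdef
    have hrpos : ∀ x : X, 0 < r x := fun x =>
      div_pos (hvpos _ (insert_nonempty _ _)) (hvpos _ (singleton_nonempty _))
    have hr : ∀ (x : X) (T : Finset X), T.Nonempty → x ∉ T →
        μ (insert x T) univ = r x * μ T univ := by
      intro x T hT hxT
      have h := hs x T {p x} hT (singleton_nonempty _) hxT (hxpx x)
      have hppos := hvpos {p x} (singleton_nonempty _)
      rw [hrdef]
      rw [div_mul_eq_mul_div, eq_div_iff hppos.ne']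
      linear_combination -h
    clear_value r
    have hcons : ∀ x y : X, x ≠ y → μ ({x} : Finset X) univ * r y = μ ({y} : Finset X) univ * r x := by
      intro x y hxy
      have h1 : μ (insert x {y}) univ = r x * μ ({y} : Finset X) univ :=
        hr x {y} (singleton_nonempty _) (by simp [hxy])
      have h2 : μ (insert y {x}) univ = r y * μ ({x} : Finset X) univ :=
        hr y {x} (singleton_nonempty _) (by simp [Ne.symm hxy])
      have hpair : (insert y {x} : Finset X) = insert x {y} := Finset.pair_comm y x
      rw [hpair] at h2
      linear_combination h1 - h2
    obtain ⟨a⟩ := hX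
    have hcpos : 0 < μ ({a} : Finset X) univ / r a :=
      div_pos (hvpos _ (singleton_nonempty _)) (hrpos a)
    set c : ℝ := μ ({a} : Finset X) univ / r a with hcdef
    have hvx : ∀ x : X, μ ({x} : Finset X) univ = c * r x := by
      intro x
      by_cases hxa : x = a
      · subst hxa
        rw [hcdef, div_mul_cancel₀ _ (hrpos x).ne']
      · have h := hcons x a hxa
        rw [hcdef, div_mul_eq_mul_div, eq_div_iff (hrpos a).ne']
        linear_combination h
    clear_value c
    have hvT : ∀ (T : Finset X) (hT : T.Nonempty), μ T univ = c * ∏ x ∈ T, r x := by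
      intro T hT
      induction hT using Finset.Nonempty.cons_induction with
      | singleton b => simpa using hvx b
      | cons b s hbs hsne ih =>
          rw [Finset.cons_eq_insert, hr b s hsne hbs, ih, Finset.prod_insert hbs]
          ring
    refine ⟨fun x => r x / (1 + r x), fun x => ⟨div_pos (hrpos x) (by linarith [hrpos x]),
      (div_lt_one (by linarith [hrpos x])).mpr (by linarith [hrpos x])⟩, ?_⟩
    intro T S hT hTS
    have hS : S.Nonempty := hT.mono hTS
    have h1r : ∀ x : X, (0:ℝ) < 1 + r x := fun x => by linarith [hrpos x]
    have hgam : ∀ x : X, 1 - r x / (1 + r x) = 1 / (1 + r x) := by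
      intro x
      rw [eq_div_iff (h1r x).ne', sub_mul, div_mul_cancel₀ _ (h1r x).ne']
      ring
    have hpow : ∑ T' ∈ S.powerset.filter (fun T => T.Nonempty), ∏ x ∈ T', r x
        = ∏ x ∈ S, (1 + r x) - 1 := by
      have h := Finset.prod_add r (fun _ => (1:ℝ)) S
      simp only [Finset.prod_const_one, mul_one] at h
      have hsplit : S.powerset = insert ∅ (S.powerset.filter (fun T => T.Nonempty)) := by
        ext t
        simp only [Finset.mem_insert, Finset.mem_filter, Finset.mem_powerset,
          Finset.nonempty_iff_ne_empty]
        constructor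
        · intro ht
          by_cases h0 : t = ∅
          · exact Or.inl h0
          · exact Or.inr ⟨ht, h0⟩
        · rintro (rfl | ⟨ht, _⟩)
          · exact Finset.empty_subset _
          · exact ht
      rw [hsplit, Finset.sum_insert (by simp), Finset.prod_empty] at h
      have hcomm : ∏ x ∈ S, (1 + r x) = ∏ i ∈ S, (r i + 1) :=
        Finset.prod_congr rfl (fun i _ => add_comm _ _)
      rw [hcomm]
      linarith [h]
    have hVS : ∑ T' ∈ S.powerset.filter (fun T => T.Nonempty), μ T' univ
        = c * (∏ x ∈ S, (1 + r x) - 1) := by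
      rw [Finset.sum_congr rfl (fun T' h' => hvT T' (mem_filter.mp h').2), ← Finset.mul_sum, hpow]
    have hPm1 : (0:ℝ) < ∏ x ∈ S, (1 + r x) - 1 := by
      have := hVpos S hS
      rw [hVS] at this
      nlinarith [hcpos]
    rw [hA T S hT hTS, hvT T hT, hVS]
    have e1 : ∏ x ∈ T, (r x / (1 + r x)) = (∏ x ∈ T, r x) / ∏ x ∈ T, (1 + r x) :=
      Finset.prod_div_distrib _ _
    have e2 : ∏ y ∈ S \ T, (1 - r y / (1 + r y)) = 1 / ∏ y ∈ S \ T, (1 + r y) := by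
      rw [Finset.prod_congr rfl (fun y _ => hgam y), Finset.prod_div_distrib,
        Finset.prod_const_one]
    have e3 : ∏ z ∈ S, (1 - r z / (1 + r z)) = 1 / ∏ z ∈ S, (1 + r z) := by
      rw [Finset.prod_congr rfl (fun z _ => hgam z), Finset.prod_div_distrib,
        Finset.prod_const_one]
    rw [e1, e2, e3]
    have hsd : (∏ y ∈ S \ T, (1 + r y)) * ∏ y ∈ T, (1 + r y) = ∏ y ∈ S, (1 + r y) :=
      Finset.prod_sdiff hTS
    have hPT : (0:ℝ) < ∏ x ∈ T, (1 + r x) := Finset.prod_pos (fun i _ => h1r i)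
    have hPST : (0:ℝ) < ∏ y ∈ S \ T, (1 + r y) := Finset.prod_pos (fun i _ => h1r i)
    have hPS : (0:ℝ) < ∏ y ∈ S, (1 + r y) := Finset.prod_pos (fun i _ => h1r i)
    field_simp
    linear_combination (∏ x ∈ T, r x) * hsd
end

section
/- If μ has a Random Reference Model representation, then μ satisfies Relative Additivity-1: for all x ∈ S and nonempty T,T' ⊆ S\{x} with T,T' ≠ Q^R(x)∩(S\{x}), it holds that μ(T,S\{x})·[μ(T',S)+μ(T'∪{x},S)] = μ(T',S\{x})·[μ(T,S)+μ(T∪{x},S)], where Q^R(x) = {x} ∪ {y ≠ x : μ({x},{x,y}) = 0}. -/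
open Finset

variable {X : Type*} [Fintype X] [DecidableEq X]

def IsRRM (μ : Finset X → Finset X → ℝ) (s : X → ℝ) (Q : X → Finset X) : Prop :=
  (∀ x, 0 < s x) ∧ (∀ x, x ∈ Q x) ∧ Function.Injective Q ∧
  ∀ T S : Finset X, T.Nonempty → T ⊆ S →
    μ T S = ∑ x ∈ S, (s x / ∑ y ∈ S, s y) * (if T = Q x ∩ S then 1 else 0)

def RRMRep (μ : Finset X → Finset X → ℝ) : Prop := ∃ s Q, IsRRM μ s Q

open scoped Classical in
/-- The revealed constraint function: `QR μ x = {x} ∪ {y ≠ x : μ({x},{x,y}) = 0}`. -/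
noncomputable def QR (μ : Finset X → Finset X → ℝ) (x : X) : Finset X :=
  insert x (Finset.univ.filter (fun y => y ≠ x ∧ μ {x} {x, y} = 0))

lemma QR_eq {μ : Finset X → Finset X → ℝ} {s : X → ℝ} {Q : X → Finset X}
    (h : IsRRM μ s Q) (x : X) : QR μ x = Q x := by
  obtain ⟨hs, hQ, _, hμ⟩ := h
  have key : ∀ y, y ≠ x → (μ {x} {x, y} = 0 ↔ y ∈ Q x) := by
    intro y hyx
    have hsub : ({x} : Finset X) ⊆ {x, y} := by intro z hz; simp at hz; simp [hz]
    have hW : (0:ℝ) < ∑ z ∈ ({x, y} : Finset X), s z := by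
      apply Finset.sum_pos (fun z _ => hs z) ⟨x, by simp⟩
    have h2 : (if ({x}:Finset X) = Q y ∩ {x, y} then (1:ℝ) else 0) = 0 := by
      rw [if_neg]
      intro hc
      have : y ∈ ({x} : Finset X) := by rw [hc]; simp [hQ y]
      simp at this; exact hyx this
    rw [hμ {x} {x, y} ⟨x, by simp⟩ hsub,
      Finset.sum_pair (fun hc => hyx hc.symm), h2, mul_zero, add_zero]
    have hpos : 0 < s x / ∑ z ∈ ({x, y} : Finset X), s z := div_pos (hs x) hW
    constructor
    · intro h0
      by_contra hy
      have : Q x ∩ {x, y} = {x} := by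
        ext z; simp only [mem_inter, mem_insert, mem_singleton]
        constructor
        · rintro ⟨hz1, hz2 | hz2⟩
          · exact hz2
          · exact absurd (hz2 ▸ hz1) hy
        · intro hz; rw [hz]; exact ⟨hQ x, Or.inl rfl⟩
      rw [this, if_pos rfl, mul_one] at h0
      exact absurd h0 hpos.ne'
    · intro hy
      rw [if_neg, mul_zero]
      intro hc
      have : y ∈ ({x} : Finset X) := by rw [hc]; simp [hy]
      simp at this; exact hyx this
  ext y
  simp only [QR, mem_insert, mem_filter, mem_univ, true_and]
  by_cases hyx : y = x
  · simp [hyx, hQ x]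
  · simp [hyx, key y hyx]

theorem rrm_relAdd1 (μ : Finset X → Finset X → ℝ) (h : RRMRep μ) :
    ∀ (x : X) (S T T' : Finset X), x ∈ S →
      T.Nonempty → T'.Nonempty → T ⊆ S.erase x → T' ⊆ S.erase x →
      T ≠ QR μ x ∩ S.erase x → T' ≠ QR μ x ∩ S.erase x →
      μ T (S.erase x) * (μ T' S + μ (insert x T') S)
        = μ T' (S.erase x) * (μ T S + μ (insert x T) S) := by
  obtain ⟨s, Q, hrrm⟩ := h
  obtain ⟨hs, hQ, hinj, hμ⟩ := hrrm
  intro x S T T' hxS hT hT' hTsub hT'sub hTne hT'ne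
  rw [QR_eq ⟨hs, hQ, hinj, hμ⟩] at hTne hT'ne
  have hWE : (0:ℝ) < ∑ z ∈ S.erase x, s z :=
    Finset.sum_pos (fun z _ => hs z) (hT.mono hTsub)
  -- key lemma
  have key : ∀ U : Finset X, U.Nonempty → U ⊆ S.erase x → U ≠ Q x ∩ S.erase x →
      μ U S + μ (insert x U) S
        = ((∑ z ∈ S.erase x, s z) / (∑ z ∈ S, s z)) * μ U (S.erase x) := by
    intro U hU hUsub hUne
    have hxU : x ∉ U := fun hx => (Finset.mem_erase.mp (hUsub hx)).1 rfl
    have hUsubS : U ⊆ S := hUsub.trans (Finset.erase_subset x S)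
    have hiUS : insert x U ⊆ S := Finset.insert_subset hxS hUsubS
    rw [hμ U S hU hUsubS, hμ (insert x U) S (insert_nonempty x U) hiUS,
        hμ U (S.erase x) hU hUsub, ← Finset.sum_add_distrib, Finset.mul_sum,
        ← Finset.add_sum_erase S _ hxS]
    have hterm0 : (s x / ∑ y ∈ S, s y) * (if U = Q x ∩ S then (1:ℝ) else 0)
        + (s x / ∑ y ∈ S, s y) * (if insert x U = Q x ∩ S then (1:ℝ) else 0) = 0 := by
      have h1 : U ≠ Q x ∩ S := by
        intro hc
        have : x ∈ Q x ∩ S := Finset.mem_inter.mpr ⟨hQ x, hxS⟩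
        rw [← hc] at this; exact hxU this
      have h2 : insert x U ≠ Q x ∩ S := by
        intro hc
        apply hUne
        rw [← Finset.erase_insert hxU, hc]
        ext z; simp only [mem_erase, mem_inter]; tauto
      rw [if_neg h1, if_neg h2]; ring
    rw [hterm0, zero_add]
    apply Finset.sum_congr rfl
    intro z hz
    rw [← mul_add, ← mul_assoc]
    have hE : (∑ z ∈ S.erase x, s z) ≠ 0 := hWE.ne'
    have hWS : (∑ z ∈ S, s z) ≠ 0 :=
      (Finset.sum_pos (fun z _ => hs z) ⟨x, hxS⟩).ne'
    have hc : (∑ z ∈ S.erase x, s z) / (∑ z ∈ S, s z) * (s z / ∑ y ∈ S.erase x, s y)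
        = s z / ∑ y ∈ S, s y := by
      rw [div_mul_div_comm, mul_comm (∑ z ∈ S.erase x, s z) (s z),
        mul_div_mul_right _ _ hE]
    rw [hc]
    congr 1
    -- indicator identity
    have hQzE : Q z ∩ S.erase x = (Q z ∩ S).erase x := by
      ext w; simp only [mem_inter, mem_erase]; tauto
    by_cases h1 : U = Q z ∩ S.erase x
    · rw [if_pos h1]
      by_cases hxQ : x ∈ Q z
      · have h2 : insert x U = Q z ∩ S := by
          rw [h1, hQzE, Finset.insert_erase (Finset.mem_inter.mpr ⟨hxQ, hxS⟩)]
        have h3 : U ≠ Q z ∩ S := by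
          intro hc'
          have : x ∈ U := hc' ▸ Finset.mem_inter.mpr ⟨hxQ, hxS⟩
          exact hxU this
        rw [if_neg h3, if_pos h2]; ring
      · have h2 : U = Q z ∩ S := by
          rw [h1, hQzE, Finset.erase_eq_of_notMem]
          simp [hxQ]
        have h3 : insert x U ≠ Q z ∩ S := by
          intro hc'
          have : x ∈ Q z ∩ S := hc' ▸ Finset.mem_insert_self x U
          exact hxQ (Finset.mem_inter.mp this).1
        rw [if_pos h2, if_neg h3]; ring
    · rw [if_neg h1, if_neg, if_neg]
      · ring
      · intro hc'
        apply h1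
        rw [hQzE, ← hc', Finset.erase_insert hxU]
      · intro hc'
        apply h1
        rw [hQzE, ← hc', Finset.erase_eq_of_notMem hxU]
  rw [key T hT hTsub hTne, key T' hT' hT'sub hT'ne]
  ring
end

section
/- If μ has an RRM representation with constraint function Q and salience parameters s, then the revealed constraint function coincides with Q: for all x ∈ X, Q^R(x) = Q(x), where Q^R(x) = {x} ∪ {y ≠ x : μ({x},{x,y}) = 0}. -/
open Finset

variable {X : Type*} [Fintype X] [DecidableEq X]

theorem revealed_constraint_eq (μ : Finset X → Finset X → ℝ)
    (s : X → ℝ) (Q : X → Finset X) (h : IsRRM μ s Q) :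
    ∀ x : X, QR μ x = Q x := by
  classical
  obtain ⟨hs, hmem, _hinj, hrep⟩ := h
  intro x
  ext y
  simp only [QR, mem_insert, mem_filter, mem_univ, true_and]
  by_cases hxy : y = x
  · subst hxy; simp [hmem y]
  · have hne : x ≠ y := fun e => hxy e.symm
    have hsum : μ {x} {x, y} =
        (s x / ∑ z ∈ ({x, y} : Finset X), s z) * (if ({x} : Finset X) = Q x ∩ {x, y} then 1 else 0)
        + (s y / ∑ z ∈ ({x, y} : Finset X), s z) * (if ({x} : Finset X) = Q y ∩ {x, y} then 1 else 0) := by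
      rw [hrep {x} {x, y} (singleton_nonempty x) (by simp)]
      exact Finset.sum_pair hne
    have hSpos : 0 < ∑ z ∈ ({x, y} : Finset X), s z :=
      Finset.sum_pos (fun i _ => hs i) ⟨x, by simp⟩
    have hy0 : ¬ ({x} : Finset X) = Q y ∩ {x, y} := by
      intro heq
      have : y ∈ ({x} : Finset X) := heq ▸ (by simp [hmem y] : y ∈ Q y ∩ {x, y})
      exact hxy (by simpa using this)
    rw [if_neg hy0] at hsum
    simp only [mul_zero, add_zero] at hsum
    constructor
    · rintro (rfl | ⟨_, hμ0⟩)
      · exact absurd rfl hxy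
      · by_contra hynot
        have hQx : ({x} : Finset X) = Q x ∩ {x, y} := by
          ext z
          simp only [mem_singleton, mem_inter, mem_insert, mem_singleton]
          constructor
          · rintro rfl; exact ⟨hmem _, Or.inl rfl⟩
          · rintro ⟨hz, rfl | rfl⟩
            · rfl
            · exact absurd hz hynot
        rw [hsum, if_pos hQx, mul_one] at hμ0
        exact absurd hμ0 (ne_of_gt (div_pos (hs x) hSpos))
    · intro hyQ
      right
      refine ⟨hxy, ?_⟩
      have : ¬ ({x} : Finset X) = Q x ∩ {x, y} := by
        intro heq
        have : y ∈ ({x} : Finset X) := heq ▸ (by simp [hyQ] : y ∈ Q x ∩ {x, y})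
        exact hxy (by simpa using this)
      rw [hsum, if_neg this, mul_zero]
end

section
/- If μ has an RRM representation and also an NSC representation, then μ has a singleton representation: μ({x},S) > 0 for all x ∈ S, μ(T,S) = 0 whenever |T| ≥ 2, and μ({x},S)/μ({y},S) = μ({x},S')/μ({y},S') for all S,S' ⊇ {x,y}. Conversely, any μ with a singleton representation has both an RRM and an NSC representation. -/
open Finset

variable {X : Type*} [Fintype X] [DecidableEq X]

def IsNSC (μ : Finset X → Finset X → ℝ) (q : ℕ) (N : Fin q → Finset X)
    (σ : Finset X → ℝ) : Prop :=
  (∀ i, (N i).Nonempty) ∧ (∀ i j, i ≠ j → Disjoint (N i) (N j)) ∧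
  ((Finset.univ : Finset (Fin q)).biUnion N = (Finset.univ : Finset X)) ∧
  σ ∅ = 0 ∧ (∀ T : Finset X, T.Nonempty → 0 < σ T) ∧
  ∀ T S : Finset X, T.Nonempty → T ⊆ S →
    μ T S = ∑ i, (σ (N i ∩ S) / ∑ j, σ (N j ∩ S)) * (if T = N i ∩ S then 1 else 0)

def NSCRep (μ : Finset X → Finset X → ℝ) : Prop := ∃ q N σ, IsNSC μ q N σ

def SingletonRep (μ : Finset X → Finset X → ℝ) : Prop :=
  (∀ (x : X) (S : Finset X), x ∈ S → 0 < μ {x} S) ∧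
  (∀ T S : Finset X, 2 ≤ T.card → μ T S = 0) ∧
  (∀ (x y : X) (S S' : Finset X), x ∈ S → y ∈ S → x ∈ S' → y ∈ S' →
    μ {x} S / μ {y} S = μ {x} S' / μ {y} S')

/-! ### Auxiliary lemmas -/

section Aux

variable {μ : Finset X → Finset X → ℝ}

lemma aux_rrm_pos {s : X → ℝ} {Q : X → Finset X} (h : IsRRM μ s Q)
    {S : Finset X} {x : X} (hx : x ∈ S) : 0 < μ (Q x ∩ S) S := by
  have hT : (Q x ∩ S).Nonempty := ⟨x, mem_inter.2 ⟨h.2.1 x, hx⟩⟩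
  have hD : 0 < ∑ y ∈ S, s y := Finset.sum_pos (fun y _ => h.1 y) ⟨x, hx⟩
  rw [h.2.2.2 _ _ hT inter_subset_right]
  apply Finset.sum_pos'
  · intro y _
    have h0 : (0:ℝ) ≤ if Q x ∩ S = Q y ∩ S then (1:ℝ) else 0 := by
      split <;> norm_num
    exact mul_nonneg (div_nonneg (h.1 y).le hD.le) h0
  · refine ⟨x, hx, ?_⟩
    rw [if_pos rfl, mul_one]
    exact div_pos (h.1 x) hD

lemma aux_rrm_zero {s : X → ℝ} {Q : X → Finset X} (h : IsRRM μ s Q)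
    {S T : Finset X} (hT : T.Nonempty) (hTS : T ⊆ S)
    (hne : ∀ x ∈ S, Q x ∩ S ≠ T) : μ T S = 0 := by
  rw [h.2.2.2 T S hT hTS]
  apply Finset.sum_eq_zero
  intro x hx
  rw [if_neg (fun hc => hne x hx hc.symm), mul_zero]

lemma aux_sigma_nonneg {q : ℕ} {N : Fin q → Finset X} {σ : Finset X → ℝ}
    (h : IsNSC μ q N σ) (T : Finset X) : 0 ≤ σ T := by
  rcases T.eq_empty_or_nonempty with he | hne
  · rw [he, h.2.2.2.1]
  · exact (h.2.2.2.2.1 _ hne).le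

lemma aux_nsc_denom_pos {q : ℕ} {N : Fin q → Finset X} {σ : Finset X → ℝ}
    (h : IsNSC μ q N σ) {S : Finset X} (hS : S.Nonempty) :
    0 < ∑ j, σ (N j ∩ S) := by
  obtain ⟨x, hx⟩ := hS
  have hcov : x ∈ (univ : Finset (Fin q)).biUnion N := h.2.2.1 ▸ mem_univ x
  obtain ⟨i, -, hi⟩ := mem_biUnion.1 hcov
  apply Finset.sum_pos'
  · intro j _; exact aux_sigma_nonneg h _
  · exact ⟨i, mem_univ i, h.2.2.2.2.1 _ ⟨x, mem_inter.2 ⟨hi, hx⟩⟩⟩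

lemma aux_nsc_val {q : ℕ} {N : Fin q → Finset X} {σ : Finset X → ℝ}
    (h : IsNSC μ q N σ) {S T : Finset X} {i : Fin q}
    (hi : N i ∩ S = T) (hT : T.Nonempty) :
    μ T S = σ T / ∑ j, σ (N j ∩ S) := by
  have hTS : T ⊆ S := hi ▸ inter_subset_right
  rw [h.2.2.2.2.2 T S hT hTS, Finset.sum_eq_single i]
  · rw [if_pos hi.symm, hi, mul_one]
  · intro j _ hj
    rw [if_neg, mul_zero]
    intro hTj
    obtain ⟨x, hx⟩ := hT
    have hxi : x ∈ N i := (mem_inter.1 (hi ▸ hx : x ∈ N i ∩ S)).1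
    have hxj : x ∈ N j := (mem_inter.1 (hTj ▸ hx : x ∈ N j ∩ S)).1
    exact Finset.disjoint_left.mp (h.2.1 i j (Ne.symm hj)) hxi hxj
  · intro h'; exact absurd (mem_univ i) h'

lemma aux_nsc_zero {q : ℕ} {N : Fin q → Finset X} {σ : Finset X → ℝ}
    (h : IsNSC μ q N σ) {S T : Finset X} (hT : T.Nonempty) (hTS : T ⊆ S)
    (hne : ∀ i, N i ∩ S ≠ T) : μ T S = 0 := by
  rw [h.2.2.2.2.2 T S hT hTS]
  apply Finset.sum_eq_zero
  intro i _
  rw [if_neg (fun hc => hne i hc.symm), mul_zero]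

lemma aux_cover {q : ℕ} {N : Fin q → Finset X} {σ : Finset X → ℝ}
    (h : IsNSC μ q N σ) (x : X) : ∃ i, x ∈ N i := by
  have hcov : x ∈ (univ : Finset (Fin q)).biUnion N := h.2.2.1 ▸ mem_univ x
  obtain ⟨i, -, hi⟩ := mem_biUnion.1 hcov
  exact ⟨i, hi⟩

/-- Sum of singleton choice probabilities is one, given that multi-valued
probabilities vanish. -/
lemma aux_sum_singletons (hμ : IsSCC μ)
    (h2 : ∀ T S : Finset X, 2 ≤ T.card → μ T S = 0)
    {S : Finset X} (hS : S.Nonempty) : ∑ y ∈ S, μ {y} S = 1 := by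
  have h1 := hμ.2.1 S hS
  have himg : S.powerset.filter (fun T => T.card = 1)
      = S.image (fun y => ({y} : Finset X)) := by
    ext T
    simp only [mem_filter, mem_powerset, mem_image, Finset.card_eq_one]
    constructor
    · rintro ⟨hTS, a, rfl⟩
      exact ⟨a, hTS (mem_singleton_self a), rfl⟩
    · rintro ⟨a, ha, rfl⟩
      exact ⟨singleton_subset_iff.2 ha, a, rfl⟩
  have hstep : ∑ T ∈ S.powerset.filter (fun T => T.Nonempty), μ T S
      = ∑ T ∈ S.powerset.filter (fun T => T.card = 1), μ T S := by
    symm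
    apply Finset.sum_subset
    · intro T hT
      simp only [mem_filter, mem_powerset] at hT ⊢
      exact ⟨hT.1, Finset.card_pos.1 (hT.2 ▸ one_pos)⟩
    · intro T hT hT2
      simp only [mem_filter, mem_powerset] at hT hT2
      apply h2
      have : T.card ≠ 1 := fun hc => hT2 ⟨hT.1, hc⟩
      have := Finset.card_pos.2 hT.2
      omega
  have hinj : Set.InjOn (fun y => ({y} : Finset X)) S := by
    intro a _ b _ hab
    exact Finset.singleton_injective hab
  rw [hstep, himg, Finset.sum_image hinj] at h1
  exact h1

end Aux

theorem rrm_and_nsc_iff_singleton (μ : Finset X → Finset X → ℝ)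
    (hcard : 3 ≤ Fintype.card X) (hμ : IsSCC μ) :
    (RRMRep μ ∧ NSCRep μ) ↔ SingletonRep μ := by
  constructor
  · rintro ⟨⟨s, Q, hR⟩, ⟨q, N, σ, hN⟩⟩
    -- Step 1: if a ∈ N i then Q a = N i
    have hQN : ∀ (a : X) (i : Fin q), a ∈ N i → Q a = N i := by
      intro a i ha
      ext d
      by_cases hd : d = a
      · subst hd; exact iff_of_true (hR.2.1 d) ha
      constructor
      · intro hdQ
        by_contra hdN
        -- d ∈ Q a, d ∉ N i : use S = {a, d}
        set S : Finset X := {a, d} with hSdef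
        have haS : a ∈ S := by simp [hSdef]
        have hdS : d ∈ S := by simp [hSdef]
        obtain ⟨j, hj⟩ := aux_cover hN d
        have hij : i ≠ j := fun hij => hdN (hij ▸ hj)
        -- NSC: μ {a} S > 0
        have hNiS : N i ∩ S = {a} := by
          ext z
          simp only [mem_inter, mem_singleton, hSdef, mem_insert]
          constructor
          · rintro ⟨hz1, hz2 | hz2⟩
            · exact hz2
            · subst hz2; exact absurd hz1 hdN
          · rintro rfl; exact ⟨ha, Or.inl rfl⟩
        have hpos : 0 < μ {a} S := by
          rw [aux_nsc_val hN hNiS (singleton_nonempty a)]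
          exact div_pos (hN.2.2.2.2.1 _ (singleton_nonempty a))
            (aux_nsc_denom_pos hN ⟨a, haS⟩)
        -- RRM: μ {a} S = 0
        have hzero : μ {a} S = 0 := by
          apply aux_rrm_zero hR (singleton_nonempty a) (singleton_subset_iff.2 haS)
          intro x hx
          simp only [hSdef, mem_insert, mem_singleton] at hx
          rcases hx with rfl | rfl
          · intro hc
            have : d ∈ Q x ∩ S := mem_inter.2 ⟨hdQ, hdS⟩
            rw [hc] at this
            exact hd (mem_singleton.1 this)
          · intro hc
            have : x ∈ Q x ∩ S := mem_inter.2 ⟨hR.2.1 x, hdS⟩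
            rw [hc] at this
            exact hd (mem_singleton.1 this)
        exact absurd hzero hpos.ne'
      · intro hdN
        by_contra hdQ
        -- d ∈ N i, d ∉ Q a : use S = {a, d}
        set S : Finset X := {a, d} with hSdef
        have haS : a ∈ S := by simp [hSdef]
        have hdS : d ∈ S := by simp [hSdef]
        -- NSC: μ {a} S = 0
        have hzero : μ {a} S = 0 := by
          apply aux_nsc_zero hN (singleton_nonempty a) (singleton_subset_iff.2 haS)
          intro j hc
          by_cases hji : j = i
          · subst hji
            have : d ∈ N j ∩ S := mem_inter.2 ⟨hdN, hdS⟩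
            rw [hc] at this
            exact hd (mem_singleton.1 this)
          · have haNj : a ∈ N j := by
              have : a ∈ N j ∩ S := hc ▸ mem_singleton_self a
              exact (mem_inter.1 this).1
            exact Finset.disjoint_left.mp (hN.2.1 j i hji) haNj ha
        -- RRM: μ {a} S > 0 since Q a ∩ S = {a}
        have hQaS : Q a ∩ S = {a} := by
          ext z
          simp only [mem_inter, mem_singleton, hSdef, mem_insert]
          constructor
          · rintro ⟨hz1, hz2 | hz2⟩
            · exact hz2
            · subst hz2; exact absurd hz1 hdQ
          · rintro rfl; exact ⟨hR.2.1 _, Or.inl rfl⟩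
        have hpos : 0 < μ {a} S := hQaS ▸ aux_rrm_pos hR haS
        exact absurd hzero hpos.ne'
    -- Step 2: each nest is a singleton
    have hnest : ∀ i : Fin q, ∃ x, N i = {x} := by
      intro i
      obtain ⟨x, hx⟩ := hN.1 i
      refine ⟨x, ?_⟩
      ext y
      simp only [mem_singleton]
      constructor
      · intro hy
        have h1 : Q y = N i := hQN y i hy
        have h2 : Q x = N i := hQN x i hx
        exact hR.2.2.1 (h1.trans h2.symm)
      · rintro rfl; exact hx
    have hix : ∀ x : X, ∃ i, N i = {x} := by
      intro x
      obtain ⟨i, hi⟩ := aux_cover hN x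
      obtain ⟨z, hz⟩ := hnest i
      rw [hz, mem_singleton] at hi
      exact ⟨i, hi ▸ hz⟩
    -- denominators
    refine ⟨?_, ?_, ?_⟩
    · -- positivity of singletons
      intro x S hxS
      obtain ⟨i, hi⟩ := hix x
      have hiS : N i ∩ S = {x} := by
        rw [hi, Finset.inter_eq_left.2 (singleton_subset_iff.2 hxS)]
      rw [aux_nsc_val hN hiS (singleton_nonempty x)]
      exact div_pos (hN.2.2.2.2.1 _ (singleton_nonempty x))
        (aux_nsc_denom_pos hN ⟨x, hxS⟩)
    · -- multi-valued sets get probability 0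
      intro T S hT2
      by_cases hTS : T ⊆ S
      · have hT : T.Nonempty := Finset.card_pos.1 (by omega)
        apply aux_nsc_zero hN hT hTS
        intro i hc
        obtain ⟨z, hz⟩ := hnest i
        have : T.card ≤ 1 := by
          calc T.card ≤ (N i).card := by
                rw [← hc]; exact Finset.card_le_card inter_subset_left
            _ = 1 := by rw [hz]; exact Finset.card_singleton z
        omega
      · exact hμ.2.2 T S hTS
    · -- ratio independence
      have hval : ∀ (x : X) (S : Finset X), x ∈ S →
          μ {x} S = σ {x} / ∑ j, σ (N j ∩ S) := by
        intro x S hxS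
        obtain ⟨i, hi⟩ := hix x
        have hiS : N i ∩ S = {x} := by
          rw [hi, Finset.inter_eq_left.2 (singleton_subset_iff.2 hxS)]
        exact aux_nsc_val hN hiS (singleton_nonempty x)
      intro x y S S' hxS hyS hxS' hyS'
      have key : ∀ (S : Finset X), x ∈ S → y ∈ S →
          μ {x} S / μ {y} S = σ {x} / σ {y} := by
        intro S hx hy
        rw [hval x S hx, hval y S hy]
        have hD : (∑ j, σ (N j ∩ S)) ≠ 0 := (aux_nsc_denom_pos hN ⟨x, hx⟩).ne'
        field_simp
      rw [key S hxS hyS, key S' hxS' hyS']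
  · -- Converse: singleton representation gives both RRM and NSC
    intro hsing
    set s : X → ℝ := fun x => μ {x} univ with hsdef
    have hpos : ∀ x, 0 < s x := fun x => hsing.1 x univ (mem_univ x)
    have hsum : ∀ S : Finset X, S.Nonempty → 0 < ∑ y ∈ S, s y :=
      fun S hS => Finset.sum_pos (fun y _ => hpos y) hS
    -- the key value computation
    have key : ∀ (S : Finset X) (x : X), x ∈ S → μ {x} S = s x / ∑ y ∈ S, s y := by
      intro S x hxS
      have hS : S.Nonempty := ⟨x, hxS⟩
      have hcross : ∀ y ∈ S, μ {x} S * s y = s x * μ {y} S := by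
        intro y hy
        have h := hsing.2.2 x y S univ hxS hy (mem_univ x) (mem_univ y)
        rw [div_eq_div_iff (hsing.1 y S hy).ne' (hpos y).ne'] at h
        exact h
      have hsum1 : ∑ y ∈ S, μ {y} S = 1 := aux_sum_singletons hμ hsing.2.1 hS
      have : μ {x} S * ∑ y ∈ S, s y = s x := by
        rw [Finset.mul_sum]
        rw [show ∑ y ∈ S, μ {x} S * s y = ∑ y ∈ S, s x * μ {y} S from
          Finset.sum_congr rfl hcross]
        rw [← Finset.mul_sum, hsum1, mul_one]
      rw [eq_div_iff (hsum S hS).ne']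
      exact this
    constructor
    · -- RRM representation
      refine ⟨s, fun x => {x}, hpos, fun x => mem_singleton_self x,
        fun a b hab => Finset.singleton_injective hab, ?_⟩
      intro T S hT hTS
      have hcard1 : 1 ≤ T.card := Finset.card_pos.2 hT
      by_cases hc1 : T.card = 1
      · obtain ⟨z, rfl⟩ := Finset.card_eq_one.1 hc1
        have hzS : z ∈ S := singleton_subset_iff.1 hTS
        rw [Finset.sum_eq_single_of_mem z hzS]
        · rw [Finset.inter_eq_left.2 (singleton_subset_iff.2 hzS), if_pos rfl,
            mul_one, key S z hzS]
        · intro x hx hxz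
          rw [if_neg, mul_zero]
          intro hc
          have : z ∈ {x} ∩ S := hc ▸ mem_singleton_self z
          exact hxz ((mem_inter.1 this).1 |> mem_singleton.1).symm
      · have hc2 : 2 ≤ T.card := by omega
        rw [hsing.2.1 T S hc2]
        symm
        apply Finset.sum_eq_zero
        intro x hx
        rw [if_neg, mul_zero]
        intro hc
        have : T.card ≤ 1 := by
          calc T.card ≤ ({x} : Finset X).card :=
              hc ▸ Finset.card_le_card inter_subset_left
            _ = 1 := Finset.card_singleton x
        omega
    · -- NSC representation
      set e : Fin (Fintype.card X) ≃ X := (Fintype.equivFin X).symm with hedef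
      refine ⟨Fintype.card X, fun i => {e i}, fun T => ∑ x ∈ T, s x,
        fun i => singleton_nonempty (e i), ?_, ?_, Finset.sum_empty,
        fun T hT => Finset.sum_pos (fun x _ => hpos x) hT, ?_⟩
      · intro i j hij
        rw [Finset.disjoint_singleton]
        exact fun hc => hij (e.injective hc)
      · ext x
        simp only [mem_biUnion, mem_univ, mem_singleton, iff_true, true_and]
        exact ⟨e.symm x, by simp⟩
      · intro T S hT hTS
        -- denominator equals sum over S
        have hD : (∑ j, ∑ x ∈ ({e j} : Finset X) ∩ S, s x) = ∑ y ∈ S, s y := by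
          rw [Fintype.sum_equiv e (fun j => ∑ x ∈ ({e j} : Finset X) ∩ S, s x)
            (fun z => ∑ x ∈ ({z} : Finset X) ∩ S, s x) (fun j => rfl)]
          rw [show ∑ y ∈ S, s y = ∑ y ∈ S, ∑ x ∈ ({y} : Finset X) ∩ S, s x from
            Finset.sum_congr rfl (fun y hy => by
              rw [Finset.inter_eq_left.2 (singleton_subset_iff.2 hy),
                Finset.sum_singleton])]
          symm
          apply Finset.sum_subset (subset_univ S)
          intro x _ hxS
          rw [Finset.singleton_inter_of_notMem hxS, Finset.sum_empty]
        rw [hD]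
        have hcard1 : 1 ≤ T.card := Finset.card_pos.2 hT
        by_cases hc1 : T.card = 1
        · obtain ⟨z, rfl⟩ := Finset.card_eq_one.1 hc1
          have hzS : z ∈ S := singleton_subset_iff.1 hTS
          rw [Finset.sum_eq_single (e.symm z)]
          · simp only [Equiv.apply_symm_apply]
            rw [Finset.inter_eq_left.2 (singleton_subset_iff.2 hzS), if_pos rfl,
              mul_one, Finset.sum_singleton, key S z hzS]
          · intro j _ hj
            rw [if_neg, mul_zero]
            intro hc
            have : z ∈ ({e j} : Finset X) ∩ S := hc ▸ mem_singleton_self z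
            have hz : e j = z := (mem_singleton.1 (mem_inter.1 this).1).symm
            exact hj (by rw [← hz, e.symm_apply_apply])
          · intro h'; exact absurd (mem_univ _) h'
        · have hc2 : 2 ≤ T.card := by omega
          rw [hsing.2.1 T S hc2]
          symm
          apply Finset.sum_eq_zero
          intro j _
          rw [if_neg, mul_zero]
          intro hc
          have : T.card ≤ 1 := by
            calc T.card ≤ ({e j} : Finset X).card :=
                hc ▸ Finset.card_le_card inter_subset_left
              _ = 1 := Finset.card_singleton _
          omega
end

section
/- A stochastic choice correspondence μ has a nest-invariant NSC representation (an NSC representation whose weighting function is constant on nonempty subsets of each nest) if and only if μ has both an NSC representation and an RCG representation. -/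
open Finset

variable {X : Type*} [Fintype X] [DecidableEq X]

/-- A nest-invariant NSC representation: the weighting function is constant on
nonempty subsets of each nest. -/
def NestInvRep (μ : Finset X → Finset X → ℝ) : Prop :=
  ∃ (q : ℕ) (N : Fin q → Finset X) (σ : Finset X → ℝ), IsNSC μ q N σ ∧
    ∀ (i : Fin q) (T T' : Finset X), T.Nonempty → T'.Nonempty →
      T ⊆ N i → T' ⊆ N i → σ T = σ T'

section Helpers

variable {μ : Finset X → Finset X → ℝ} {q : ℕ} {N : Fin q → Finset X} {σ : Finset X → ℝ}
variable {m : Finset X → ℝ}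

lemma nest_unique (h : IsNSC μ q N σ) {T : Finset X} (hT : T.Nonempty)
    {i j : Fin q} (hi : T ⊆ N i) (hj : T ⊆ N j) : i = j := by
  by_contra hne
  obtain ⟨x, hx⟩ := hT
  exact (Finset.disjoint_left.mp (h.2.1 i j hne) (hi hx)) (hj hx)

lemma nest_inj (h : IsNSC μ q N σ) {i j : Fin q} (hij : N i = N j) : i = j :=
  nest_unique h (h.1 i) (Finset.Subset.refl _) (le_of_eq hij)

lemma exists_nest (h : IsNSC μ q N σ) (x : X) : ∃ i, x ∈ N i := by
  have hx : x ∈ (Finset.univ : Finset (Fin q)).biUnion N := by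
    rw [h.2.2.1]; exact Finset.mem_univ x
  simpa using hx

lemma sigma_nonneg (h : IsNSC μ q N σ) (T : Finset X) : 0 ≤ σ T := by
  rcases T.eq_empty_or_nonempty with rfl | hT
  · exact le_of_eq h.2.2.2.1.symm
  · exact (h.2.2.2.2.1 T hT).le

lemma nest_sum_single (h : IsNSC μ q N σ) (f : Fin q → ℝ) (i : Fin q) :
    (∑ k, if N i = N k then f k else 0) = f i := by
  rw [Finset.sum_eq_single i (fun b _ hb => if_neg fun hc => hb (nest_inj h hc).symm)
    (fun hi => absurd (Finset.mem_univ i) hi), if_pos rfl]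

lemma mu_univ (h : IsNSC μ q N σ) {T : Finset X} (hT : T.Nonempty) :
    μ T Finset.univ = (∑ i, if T = N i then σ (N i) else 0) / ∑ j, σ (N j) := by
  have hf := h.2.2.2.2.2 T Finset.univ hT (Finset.subset_univ T)
  simp only [Finset.inter_univ] at hf
  rw [hf, Finset.sum_div]
  exact Finset.sum_congr rfl fun i _ => by split_ifs <;> simp

lemma mu_univ_nest (h : IsNSC μ q N σ) (i : Fin q) :
    μ (N i) Finset.univ = σ (N i) / ∑ j, σ (N j) := by
  rw [mu_univ h (h.1 i), nest_sum_single h]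

lemma mu_univ_notnest (h : IsNSC μ q N σ) {T : Finset X} (hT : T.Nonempty)
    (hn : ∀ i, T ≠ N i) : μ T Finset.univ = 0 := by
  rw [mu_univ h hT, Finset.sum_eq_zero fun i _ => if_neg (hn i), zero_div]

lemma sum_ite_swap (N : Fin q → Finset X) (w : Fin q → ℝ)
    (P : Finset X → Prop) [DecidablePred P] :
    (∑ C : Finset X, if P C then (∑ i, if C = N i then w i else 0) else 0)
      = ∑ i, if P (N i) then w i else 0 := by
  have key : ∀ C : Finset X, (if P C then (∑ i, if C = N i then w i else 0) else 0)
      = ∑ i, if C = N i then (if P C then w i else 0) else 0 := by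
    intro C
    by_cases hP : P C
    · simp only [if_pos hP]
    · simp only [if_neg hP]
      exact (Finset.sum_eq_zero fun i _ => by split_ifs <;> rfl).symm
  simp only [key]
  rw [Finset.sum_comm]
  refine Finset.sum_congr rfl fun i _ => ?_
  rw [Finset.sum_ite_eq' Finset.univ (N i) (fun C => if P C then w i else 0),
    if_pos (Finset.mem_univ _)]

lemma sum_ite_div {n : ℕ} (P : Fin n → Prop) [DecidablePred P] (f : Fin n → ℝ) (d : ℝ) :
    ∑ i, (if P i then f i / d else 0) = (∑ i, if P i then f i else 0) / d := by
  rw [Finset.sum_div]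
  exact Finset.sum_congr rfl fun i _ => by split_ifs <;> simp

lemma rcg_nestmass (N : Fin q → Finset X) (w : Fin q → ℝ) (T S : Finset X) :
    rcgVal (fun C => ∑ i, if C = N i then w i else 0) T S
      = (∑ i, if T = N i ∩ S then w i else 0)
        / (∑ i, if (N i ∩ S).Nonempty then w i else 0) := by
  simp only [rcgVal]
  rw [Finset.sum_filter]
  rw [sum_ite_swap N w (fun C => T = C ∩ S), sum_ite_swap N w (fun C => (C ∩ S).Nonempty)]

lemma sum_nestmass_total (N : Fin q → Finset X) (w : Fin q → ℝ) :
    ∑ C : Finset X, (∑ i, if C = N i then w i else 0) = ∑ i, w i := by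
  rw [Finset.sum_comm]
  refine Finset.sum_congr rfl fun i _ => ?_
  rw [Finset.sum_ite_eq' Finset.univ (N i) (fun _ => w i), if_pos (Finset.mem_univ _)]

/-- The nest-invariant weighting function built from an RCG mass `m`. -/
def sigNest (N : Fin q → Finset X) (m : Finset X → ℝ) (T : Finset X) : ℝ :=
  (∑ i, if T.Nonempty ∧ T ⊆ N i then m (N i) else 0) +
  (if T.Nonempty ∧ ∀ i, ¬ T ⊆ N i then 1 else 0)

lemma sigNest_empty (N : Fin q → Finset X) (m : Finset X → ℝ) :
    sigNest N m (∅ : Finset X) = 0 := by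
  simp [sigNest]

lemma sigNest_of_subset (h : IsNSC μ q N σ) (m : Finset X → ℝ) {T : Finset X}
    (hT : T.Nonempty) {i : Fin q} (hi : T ⊆ N i) : sigNest N m T = m (N i) := by
  have h1 : (∑ k, if T.Nonempty ∧ T ⊆ N k then m (N k) else 0) = m (N i) := by
    rw [Finset.sum_eq_single i (fun b _ hb => if_neg fun hc => hb (nest_unique h hT hc.2 hi))
      (fun hmem => absurd (Finset.mem_univ i) hmem), if_pos ⟨hT, hi⟩]
  have h2 : (if T.Nonempty ∧ ∀ k, ¬ T ⊆ N k then (1:ℝ) else 0) = 0 :=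
    if_neg fun hc => hc.2 i hi
  simp only [sigNest, h1, h2, add_zero]

end Helpers

theorem nestInv_iff_nsc_and_rcg (μ : Finset X → Finset X → ℝ)
    (hcard : 3 ≤ Fintype.card X) (hμ : IsSCC μ) :
    NestInvRep μ ↔ NSCRep μ ∧ RCGRep μ := by
  classical
  have hXne : Nonempty X := Fintype.card_pos_iff.mp (by omega)
  constructor
  · rintro ⟨q, N, σ, h, hinv⟩
    obtain ⟨i0, hi0⟩ := exists_nest h (Classical.arbitrary X)
    have hD : 0 < ∑ j, σ (N j) :=
      Finset.sum_pos (fun j _ => h.2.2.2.2.1 _ (h.1 j)) ⟨i0, Finset.mem_univ i0⟩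
    refine ⟨⟨q, N, σ, h⟩,
      fun C => ∑ i, if C = N i then σ (N i) / (∑ j, σ (N j)) else 0, ?_, ?_, ?_, ?_, ?_⟩
    · intro C
      refine Finset.sum_nonneg fun i _ => ?_
      split_ifs
      · exact div_nonneg (sigma_nonneg h _) hD.le
      · exact le_refl 0
    · exact Finset.sum_eq_zero fun i _ => if_neg fun hc => (h.1 i).ne_empty hc.symm
    · rw [sum_nestmass_total, ← Finset.sum_div, div_self hD.ne']
    · intro x
      obtain ⟨i, hx⟩ := exists_nest h x
      refine ⟨N i, hx, ?_⟩
      beta_reduce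
      rw [nest_sum_single h]
      exact div_pos (h.2.2.2.2.1 _ (h.1 i)) hD
    · intro T S hT hTS
      rw [rcg_nestmass N (fun i => σ (N i) / (∑ j, σ (N j))) T S]
      rw [sum_ite_div (fun i => T = N i ∩ S) (fun i => σ (N i)) (∑ j, σ (N j)),
          sum_ite_div (fun i => (N i ∩ S).Nonempty) (fun i => σ (N i)) (∑ j, σ (N j))]
      have hB : 0 < ∑ i, if (N i ∩ S).Nonempty then σ (N i) else 0 := by
        obtain ⟨x, hxT⟩ := hT
        obtain ⟨i, hxN⟩ := exists_nest h x
        have hne : (N i ∩ S).Nonempty := ⟨x, Finset.mem_inter.mpr ⟨hxN, hTS hxT⟩⟩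
        refine Finset.sum_pos' (fun j _ => ?_) ⟨i, Finset.mem_univ i, ?_⟩
        · split_ifs
          · exact sigma_nonneg h _
          · exact le_refl 0
        · rw [if_pos hne]; exact h.2.2.2.2.1 _ (h.1 i)
      have hcancel :
          (∑ i, if T = N i ∩ S then σ (N i) else 0) / (∑ j, σ (N j))
            / ((∑ i, if (N i ∩ S).Nonempty then σ (N i) else 0) / (∑ j, σ (N j)))
          = (∑ i, if T = N i ∩ S then σ (N i) else 0)
            / (∑ i, if (N i ∩ S).Nonempty then σ (N i) else 0) := by
        field_simp
      rw [hcancel]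
      rw [h.2.2.2.2.2 T S hT hTS]
      have hterm : ∀ i ∈ (Finset.univ : Finset (Fin q)),
          σ (N i ∩ S) / (∑ j, σ (N j ∩ S)) * (if T = N i ∩ S then (1:ℝ) else 0)
            = (if T = N i ∩ S then σ (N i) else 0) / (∑ j, σ (N j ∩ S)) := by
        intro i _
        by_cases hP : T = N i ∩ S
        · rw [if_pos hP, if_pos hP, mul_one]
          congr 1
          exact hinv i _ _ (hP ▸ hT) (h.1 i) Finset.inter_subset_left (Finset.Subset.refl _)
        · rw [if_neg hP, if_neg hP, mul_zero, zero_div]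
      have hBs : (∑ j, σ (N j ∩ S)) = ∑ j, if (N j ∩ S).Nonempty then σ (N j) else 0 :=
        Finset.sum_congr rfl fun j _ => by
          by_cases hne : (N j ∩ S).Nonempty
          · rw [if_pos hne]
            exact hinv j _ _ hne (h.1 j) Finset.inter_subset_left (Finset.Subset.refl _)
          · rw [if_neg hne, Finset.not_nonempty_iff_eq_empty.mp hne, h.2.2.2.1]
      rw [Finset.sum_congr rfl hterm, ← Finset.sum_div, hBs]
  · rintro ⟨⟨q, N, σ, h⟩, m, hm0, hme, hmsum, hmcov, hmrep⟩
    obtain ⟨i0, hi0⟩ := exists_nest h (Classical.arbitrary X)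
    have hD : 0 < ∑ j, σ (N j) :=
      Finset.sum_pos (fun j _ => h.2.2.2.2.1 _ (h.1 j)) ⟨i0, Finset.mem_univ i0⟩
    have hmu : ∀ T : Finset X, T.Nonempty → μ T Finset.univ = m T := by
      intro T hT
      rw [hmrep T Finset.univ hT (Finset.subset_univ T)]
      simp only [rcgVal, Finset.inter_univ]
      rw [Finset.sum_ite_eq Finset.univ T m, if_pos (Finset.mem_univ T)]
      have hden : ∑ C ∈ Finset.univ.filter (fun C : Finset X => C.Nonempty), m C = 1 := by
        rw [Finset.sum_filter,
          Finset.sum_congr rfl fun C _ => ?_, hmsum]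
        rcases C.eq_empty_or_nonempty with rfl | hC
        · simp [hme]
        · rw [if_pos hC]
      rw [hden, div_one]
    have hmN : ∀ i, 0 < m (N i) := fun i => by
      rw [← hmu (N i) (h.1 i), mu_univ_nest h i]
      exact div_pos (h.2.2.2.2.1 _ (h.1 i)) hD
    have hmX : ∀ C : Finset X, m C = ∑ i, if C = N i then m (N i) else 0 := by
      intro C
      rcases C.eq_empty_or_nonempty with rfl | hC
      · rw [hme]
        exact (Finset.sum_eq_zero fun i _ => if_neg fun hc => (h.1 i).ne_empty hc.symm).symm
      · by_cases hE : ∃ i, C = N i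
        · obtain ⟨i, rfl⟩ := hE
          rw [nest_sum_single h (fun k => m (N k)) i]
        · push_neg at hE
          rw [← hmu C hC, mu_univ_notnest h hC hE]
          exact (Finset.sum_eq_zero fun i _ => if_neg (hE i)).symm
    refine ⟨q, N, sigNest N m, ⟨h.1, h.2.1, h.2.2.1, sigNest_empty N m, ?_, ?_⟩, ?_⟩
    · intro T hT
      by_cases hE : ∃ i, T ⊆ N i
      · obtain ⟨i, hi⟩ := hE
        rw [sigNest_of_subset h m hT hi]
        exact hmN i
      · push_neg at hE
        simp only [sigNest]
        rw [if_pos ⟨hT, hE⟩,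
          Finset.sum_eq_zero fun k _ => if_neg fun hc => hE k hc.2, zero_add]
        norm_num
    · intro T S hT hTS
      have e1 : rcgVal m T S = rcgVal (fun C => ∑ i, if C = N i then m (N i) else 0) T S :=
        congrArg (fun f => rcgVal f T S) (funext hmX)
      rw [hmrep T S hT hTS, e1, rcg_nestmass N (fun i => m (N i)) T S]
      have hsig : ∀ j, sigNest N m (N j ∩ S) = if (N j ∩ S).Nonempty then m (N j) else 0 := by
        intro j
        by_cases hne : (N j ∩ S).Nonempty
        · rw [if_pos hne, sigNest_of_subset h m hne Finset.inter_subset_left]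
        · rw [if_neg hne, Finset.not_nonempty_iff_eq_empty.mp hne, sigNest_empty]
      have hterm : ∀ i ∈ (Finset.univ : Finset (Fin q)),
          sigNest N m (N i ∩ S) / (∑ j, sigNest N m (N j ∩ S))
              * (if T = N i ∩ S then (1:ℝ) else 0)
            = (if T = N i ∩ S then m (N i) else 0) / (∑ j, sigNest N m (N j ∩ S)) := by
        intro i _
        by_cases hP : T = N i ∩ S
        · rw [if_pos hP, if_pos hP, mul_one, hsig i, if_pos (hP ▸ hT)]
        · rw [if_neg hP, if_neg hP, mul_zero, zero_div]
      have hBs : (∑ j, sigNest N m (N j ∩ S))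
          = ∑ j, if (N j ∩ S).Nonempty then m (N j) else 0 :=
        Finset.sum_congr rfl fun j _ => hsig j
      rw [Finset.sum_congr rfl hterm, ← Finset.sum_div, hBs]
    · intro i T T' hT hT' hTN hT'N
      rw [sigNest_of_subset h m hT hTN, sigNest_of_subset h m hT' hT'N]
end
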